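/- arXiv:1612.03491 — 2 statements merged into one kernel-verified Lean document; each statement's English description precedes it below -/
import Mathlib

section
/- Let G be a finitely generated group equipped with a word metric for a finite generating set, and suppose that G (with its word metric) is bilipschitz equivalent to the space X = {(2^c a, 2^c b, 2^c) : a, b, c ∈ ℤ} equipped with the hyperbolic metric d_H. Then ℤ² acts translation-like on G. -/
/-- `arccosh t = log (t + √(t² - 1))`. -/
noncomputable def arcosh (t : ℝ) : ℝ := Real.log (t + Real.sqrt (t ^ 2 - 1))

/-- The upper half-space `U = {p ∈ ℝ³ : p₃ > 0}`. -/
def upperHalfSpace : Set (ℝ × ℝ × ℝ) := {p | 0 < p.2.2}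

/-- The hyperbolic distance in the upper half-space model of `ℍ³`. -/
noncomputable def dH (p q : ℝ × ℝ × ℝ) : ℝ :=
  arcosh (1 + ((p.1 - q.1) ^ 2 + (p.2.1 - q.2.1) ^ 2 + (p.2.2 - q.2.2) ^ 2) /
    (2 * p.2.2 * q.2.2))

/-- The set `X = {(2^c a, 2^c b, 2^c) : a, b, c ∈ ℤ}`. -/
def Xset : Set (ℝ × ℝ × ℝ) :=
  {p | ∃ a b c : ℤ, p = ((2 : ℝ) ^ c * a, (2 : ℝ) ^ c * b, (2 : ℝ) ^ c)}

/-- The word length of `g` with respect to a generating set `S`: the minimal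
length of a word in `S ∪ S⁻¹` representing `g`. -/
noncomputable def wordLength {G : Type*} [Group G] (S : Set G) (g : G) : ℕ :=
  sInf {n : ℕ | ∃ l : List G, (∀ x ∈ l, x ∈ S ∨ x⁻¹ ∈ S) ∧ l.prod = g ∧ l.length = n}

/-- The word metric on `G` with respect to a generating set `S`. -/
noncomputable def wordDist {G : Type*} [Group G] (S : Set G) (g₁ g₂ : G) : ℝ :=
  (wordLength S (g₁⁻¹ * g₂) : ℝ)

/-- The translation action of `ℤ²` on `Xset`. -/
noncomputable def XsetAct (v : ℤ × ℤ) (x : Xset) : Xset :=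
  ⟨((x : ℝ × ℝ × ℝ).1 + (x : ℝ × ℝ × ℝ).2.2 * v.1,
    (x : ℝ × ℝ × ℝ).2.1 + (x : ℝ × ℝ × ℝ).2.2 * v.2,
    (x : ℝ × ℝ × ℝ).2.2), by
      obtain ⟨a, b, c, h⟩ := x.2
      refine ⟨a + v.1, b + v.2, c, ?_⟩
      simp only [h, Prod.mk.injEq]
      push_cast
      exact ⟨by ring, by ring, trivial⟩⟩

lemma Xset_pos (x : Xset) : 0 < (x : ℝ × ℝ × ℝ).2.2 := by
  obtain ⟨a, b, c, h⟩ := x.2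
  rw [h]
  exact zpow_pos (by norm_num) c

/-- If a finitely generated group `G`, with the word metric of a
finite generating set `S`, is bilipschitz equivalent to `(X, d_H)`, then `ℤ²`
acts translation-like on `G`: there is an action of `ℤ²` on `G` which is free
and in which every element moves points a bounded distance in the word
metric. -/
theorem Z2_translation_like_on_group_bilipschitz_to_Xset
    {G : Type*} [Group G] (S : Finset G)
    (hSgen : Subgroup.closure (S : Set G) = ⊤)
    (ψ : Xset → G) (hbij : Function.Bijective ψ)
    (K : ℝ) (hK : 1 ≤ K)
    (hbilip : ∀ x x' : Xset,
      (1 / K) * dH (x : ℝ × ℝ × ℝ) (x' : ℝ × ℝ × ℝ) ≤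
        wordDist (S : Set G) (ψ x) (ψ x') ∧
      wordDist (S : Set G) (ψ x) (ψ x') ≤
        K * dH (x : ℝ × ℝ × ℝ) (x' : ℝ × ℝ × ℝ)) :
    ∃ μ : ℤ × ℤ → G → G,
      -- `μ` is an action of `ℤ²` on `G`:
      (∀ g : G, μ (0, 0) g = g) ∧
      (∀ v w : ℤ × ℤ, ∀ g : G, μ (v + w) g = μ v (μ w g)) ∧
      -- the action is free:
      (∀ v : ℤ × ℤ, ∀ g : G, μ v g = g → v = (0, 0)) ∧
      -- every element moves points a bounded distance:
      (∀ v : ℤ × ℤ, ∃ C : ℝ, ∀ g : G, wordDist (S : Set G) g (μ v g) ≤ C) := by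
  let e : Xset ≃ G := Equiv.ofBijective ψ hbij
  refine ⟨fun v g => e (XsetAct v (e.symm g)), ?_, ?_, ?_, ?_⟩
  · intro g
    show e (XsetAct (0, 0) (e.symm g)) = g
    have : XsetAct (0, 0) (e.symm g) = e.symm g := by
      apply Subtype.ext
      simp [XsetAct]
    rw [this, e.apply_symm_apply]
  · intro v w g
    show e (XsetAct (v + w) (e.symm g)) = e (XsetAct v (e.symm (e (XsetAct w (e.symm g)))))
    rw [e.symm_apply_apply]
    congr 1
    apply Subtype.ext
    simp only [XsetAct, Prod.fst_add, Prod.snd_add]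
    push_cast
    refine Prod.ext (by ring) (Prod.ext (by ring) rfl)
  · intro v g h
    replace h : e (XsetAct v (e.symm g)) = g := h
    have h2 : XsetAct v (e.symm g) = e.symm g := e.injective (by rw [h, e.apply_symm_apply])
    have h3 := congrArg (fun x : Xset => (x : ℝ × ℝ × ℝ)) h2
    have hz := Xset_pos (e.symm g)
    set p := ((e.symm g : Xset) : ℝ × ℝ × ℝ) with hp
    have h1 : p.1 + p.2.2 * v.1 = p.1 := congrArg Prod.fst h3
    have hb : p.2.1 + p.2.2 * v.2 = p.2.1 := congrArg (fun q : ℝ × ℝ × ℝ => q.2.1) h3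
    have hv1 : (v.1 : ℝ) = 0 := by
      have : p.2.2 * v.1 = 0 := by linarith
      rcases mul_eq_zero.mp this with h' | h'
      · exact absurd h' (ne_of_gt hz)
      · exact h'
    have hv2 : (v.2 : ℝ) = 0 := by
      have : p.2.2 * v.2 = 0 := by linarith
      rcases mul_eq_zero.mp this with h' | h'
      · exact absurd h' (ne_of_gt hz)
      · exact h'
    have : v.1 = 0 := by exact_mod_cast hv1
    have : v.2 = 0 := by exact_mod_cast hv2
    ext <;> simp_all
  · intro v
    refine ⟨K * arcosh (1 + ((v.1 : ℝ) ^ 2 + (v.2 : ℝ) ^ 2) / 2), fun g => ?_⟩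
    have hx := (hbilip (e.symm g) (XsetAct v (e.symm g))).2
    have hg : ψ (e.symm g) = g := e.apply_symm_apply g
    have hz := Xset_pos (e.symm g)
    have hd : dH ((e.symm g : Xset) : ℝ × ℝ × ℝ) ((XsetAct v (e.symm g) : Xset) : ℝ × ℝ × ℝ)
        = arcosh (1 + ((v.1 : ℝ) ^ 2 + (v.2 : ℝ) ^ 2) / 2) := by
      set p := ((e.symm g : Xset) : ℝ × ℝ × ℝ) with hp
      have hzne : p.2.2 ≠ 0 := ne_of_gt hz
      simp only [dH, XsetAct]
      rw [← hp]
      congr 1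
      field_simp
      ring
    calc wordDist (S : Set G) g (e (XsetAct v (e.symm g)))
        = wordDist (S : Set G) (ψ (e.symm g)) (ψ (XsetAct v (e.symm g))) := by
          rw [hg]; rfl
      _ ≤ K * dH ((e.symm g : Xset) : ℝ × ℝ × ℝ)
            ((XsetAct v (e.symm g) : Xset) : ℝ × ℝ × ℝ) := hx
      _ = K * arcosh (1 + ((v.1 : ℝ) ^ 2 + (v.2 : ℝ) ^ 2) / 2) := by rw [hd]
end

section
/- For every r > 0 and every x ∈ X, the number of points of X = {(2^c a, 2^c b, 2^c) : a, b, c ∈ ℤ} within hyperbolic distance r of x is at most C · e^{K r} for constants C, K > 0 independent of x and r; that is, the cardinality of balls in X grows at most exponentially in the radius. -/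
private lemma le_exp_of_arcosh_le {t r : ℝ} (ht : 1 ≤ t) (h : arcosh t ≤ r) :
    t ≤ Real.exp r := by
  have hs := Real.sqrt_nonneg (t ^ 2 - 1)
  have h2 : (0:ℝ) < t + Real.sqrt (t ^ 2 - 1) := by linarith
  calc t ≤ t + Real.sqrt (t ^ 2 - 1) := by linarith
    _ = Real.exp (arcosh t) := (Real.exp_log h2).symm
    _ ≤ Real.exp r := Real.exp_le_exp.2 h

private lemma card_Icc_le' (m L : ℝ) :
    (Finset.Icc ⌈m - L⌉ ⌊m + L⌋).card ≤ ⌊2 * L⌋₊ + 1 := by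
  rw [Int.card_Icc]
  have h1 : (⌊m + L⌋ : ℝ) ≤ m + L := Int.floor_le _
  have h2 : (m - L : ℝ) ≤ ⌈m - L⌉ := Int.le_ceil _
  have h4 : ⌊m + L⌋ - ⌈m - L⌉ ≤ ⌊2 * L⌋ := Int.le_floor.2 (by push_cast; linarith)
  have h5 : ⌊2 * L⌋ ≤ (⌊2 * L⌋₊ : ℤ) := by
    rw [← Int.floor_toNat]; exact Int.self_le_toNat _
  omega

set_option maxHeartbeats 1000000 in
/-- Balls in `X` grow at most exponentially: there are constants
`C, K > 0`, independent of the center and the radius, such that for every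
`r > 0` and every `x ∈ X`, the number of points of `X` within hyperbolic
distance `r` of `x` is at most `C * exp (K * r)`. -/
theorem Xset_balls_grow_at_most_exponentially :
    ∃ C : ℝ, 0 < C ∧ ∃ K : ℝ, 0 < K ∧
      ∀ r : ℝ, 0 < r → ∀ x ∈ Xset,
        {y | y ∈ Xset ∧ dH x y ≤ r}.Finite ∧
        ({y | y ∈ Xset ∧ dH x y ≤ r}.ncard : ℝ) ≤ C * Real.exp (K * r) := by
  refine ⟨686, by norm_num, 3, by norm_num, ?_⟩
  intro r hr x hx
  obtain ⟨a, b, c, rfl⟩ := hx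
  have hEpos : 0 < Real.exp r := Real.exp_pos r
  set E : ℝ := Real.exp r with hE
  have hE1 : (1:ℝ) ≤ E := Real.one_le_exp hr.le
  have hlog2 : (0.6931471803 : ℝ) < Real.log 2 := Real.log_two_gt_d9
  have hlog2' : Real.log 2 < 0.6931471808 := Real.log_two_lt_d9
  have hlogpos : (0:ℝ) < Real.log 2 := by linarith
  set D : ℕ := ⌈(r + 2) / Real.log 2⌉₊ with hD
  set L : ℝ := 2 * Real.sqrt 2 * E with hL
  have hsqrt2 : Real.sqrt 2 ≤ 1.5 := by
    nlinarith [Real.sq_sqrt (by norm_num : (0:ℝ) ≤ 2), Real.sqrt_nonneg 2]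
  have hLpos : 0 < L := by positivity
  set M : ℕ := ⌊2 * L⌋₊ + 1 with hM
  have hzpos : (0:ℝ) < (2:ℝ) ^ c := by positivity
  set T : Finset (ℤ × ℤ × ℤ) :=
    (Finset.Icc (c - (D:ℤ)) (c + (D:ℤ))).biUnion (fun d =>
      (Finset.Icc ⌈(2:ℝ)^(c-d) * a - L⌉ ⌊(2:ℝ)^(c-d) * a + L⌋) ×ˢ
      ((Finset.Icc ⌈(2:ℝ)^(c-d) * b - L⌉ ⌊(2:ℝ)^(c-d) * b + L⌋) ×ˢ
      ({d} : Finset ℤ))) with hT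
  set f : ℤ × ℤ × ℤ → ℝ × ℝ × ℝ :=
    fun p => ((2:ℝ)^p.2.2 * p.1, (2:ℝ)^p.2.2 * p.2.1, (2:ℝ)^p.2.2) with hf
  have hsub : {y | y ∈ Xset ∧
      dH ((2:ℝ)^c * a, (2:ℝ)^c * b, (2:ℝ)^c) y ≤ r} ⊆ f '' ↑T := by
    rintro y ⟨⟨a', b', d, rfl⟩, hdist⟩
    refine ⟨(a', b', d), ?_, rfl⟩
    have hwpos : (0:ℝ) < (2:ℝ) ^ d := by positivity
    set z : ℝ := (2:ℝ) ^ c with hz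
    set w : ℝ := (2:ℝ) ^ d with hw
    set p1 : ℝ := z * a - w * a' with hp1
    set p2 : ℝ := z * b - w * b' with hp2
    have h2zw : (0:ℝ) < 2 * z * w := by positivity
    have hzw0 : (0:ℝ) < z * w := by positivity
    have hdH : dH ((2:ℝ)^c * a, (2:ℝ)^c * b, (2:ℝ)^c)
        ((2:ℝ)^d * a', (2:ℝ)^d * b', (2:ℝ)^d)
        = arcosh (1 + (p1^2 + p2^2 + (z - w)^2) / (2 * z * w)) := by
      simp only [dH, hp1, hp2, hz, hw]
    rw [hdH] at hdist
    have hQ0 : (0:ℝ) ≤ p1^2 + p2^2 + (z - w)^2 := by positivity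
    have ht1 : (1:ℝ) ≤ 1 + (p1^2 + p2^2 + (z - w)^2) / (2 * z * w) := by
      have : 0 ≤ (p1^2 + p2^2 + (z - w)^2) / (2 * z * w) := div_nonneg hQ0 h2zw.le
      linarith
    have ht2 := le_exp_of_arcosh_le ht1 hdist
    have hQle : p1^2 + p2^2 + (z - w)^2 ≤ 2 * z * w * E := by
      have h := (div_le_iff₀ h2zw).1
        (by linarith : (p1^2 + p2^2 + (z - w)^2) / (2 * z * w) ≤ E - 1)
      nlinarith [hzw0]
    have hterm3 : (z - w)^2 ≤ 2 * z * w * E := by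
      linarith [sq_nonneg p1, sq_nonneg p2]
    have ha' : (z * a - w * a')^2 ≤ 2 * z * w * E := by
      have h' : p1^2 ≤ 2 * z * w * E := by
        linarith [sq_nonneg p2, sq_nonneg (z - w)]
      rw [hp1] at h'; exact h'
    have hb' : (z * b - w * b')^2 ≤ 2 * z * w * E := by
      have h' : p2^2 ≤ 2 * z * w * E := by
        linarith [sq_nonneg p1, sq_nonneg (z - w)]
      rw [hp2] at h'; exact h'
    clear hdist hdH ht1 ht2 hQle hQ0
    have hwz : w ≤ 4 * E * z := by
      nlinarith [sq_nonneg z, hzw0, hwpos, hzpos, hE1]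
    have hzw : z ≤ 4 * E * w := by
      nlinarith [sq_nonneg w, hzw0, hwpos, hzpos, hE1]
    -- bound |d - c| ≤ D
    have key : ∀ c' d' : ℤ, (0:ℝ) < (2:ℝ)^c' → (2:ℝ)^d' ≤ 4 * E * (2:ℝ)^c' →
        d' - c' ≤ (D:ℤ) := by
      intro c' d' hc'pos hle
      have hpow : (2:ℝ)^(d' - c') ≤ 4 * E := by
        rw [zpow_sub₀ (by norm_num : (2:ℝ) ≠ 0), div_le_iff₀ hc'pos]
        linarith [hle]
      have hlog := Real.log_le_log (by positivity) hpow
      rw [Real.log_zpow] at hlog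
      have hlog4E : Real.log (4 * E) = 2 * Real.log 2 + r := by
        rw [Real.log_mul (by norm_num) (by positivity), hE, Real.log_exp,
          show (4:ℝ) = 2^2 by norm_num, Real.log_pow]
        push_cast; ring
      rw [hlog4E] at hlog
      have hdc' : ((d' - c' : ℤ) : ℝ) * Real.log 2 ≤
          (2 + r / Real.log 2) * Real.log 2 := by
        rw [add_mul, div_mul_cancel₀ _ (ne_of_gt hlogpos)]
        linarith
      have hdc : ((d' - c' : ℤ) : ℝ) ≤ 2 + r / Real.log 2 :=
        le_of_mul_le_mul_right hdc' hlogpos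
      have h2div : (2:ℝ) + r / Real.log 2 ≤ (r + 2) / Real.log 2 := by
        rw [add_div]
        have : (2:ℝ) ≤ 2 / Real.log 2 := by
          rw [le_div_iff₀ hlogpos]; nlinarith
        linarith
      have : ((d' - c' : ℤ) : ℝ) ≤ (D : ℝ) :=
        le_trans hdc (le_trans h2div (Nat.le_ceil _))
      exact_mod_cast this
    have hd1 : d - c ≤ (D:ℤ) := key c d hzpos hwz
    have hd2 : c - d ≤ (D:ℤ) := key d c hwpos hzw
    -- bound a', b'
    have habs : ∀ u : ℤ, ∀ v : ℝ, (z * v - w * u)^2 ≤ 2 * z * w * E →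
        u ∈ Finset.Icc ⌈(2:ℝ)^(c-d) * v - L⌉ ⌊(2:ℝ)^(c-d) * v + L⌋ := by
      intro u v hsq
      set s : ℝ := z * v - w * u with hs
      set m : ℝ := (2:ℝ)^(c-d) * v with hm
      have hcd : (2:ℝ)^(c-d) = z / w := by
        rw [zpow_sub₀ (by norm_num : (2:ℝ) ≠ 0)]
      have hw2 : (0:ℝ) < w^2 := by positivity
      have e1 : ((u:ℝ) - m)^2 * w^2 = s^2 := by
        rw [hm, hs, hcd]; field_simp; ring
      have hLsq : L^2 = 8 * E^2 := by
        rw [hL, mul_pow, mul_pow, Real.sq_sqrt (by norm_num : (0:ℝ) ≤ 2)]; ring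
      have hsq' : ((u:ℝ) - m)^2 ≤ L^2 := by
        rw [← mul_le_mul_iff_left₀ hw2, e1, hLsq]
        nlinarith [mul_pos hwpos hEpos, hzw, hsq, hwpos, hEpos]
      have h1 : (u:ℝ) - m ≤ L := by
        nlinarith [sq_nonneg ((u:ℝ) - m + L), hLpos]
      have h2 : -L ≤ (u:ℝ) - m := by
        nlinarith [sq_nonneg ((u:ℝ) - m - L), hLpos]
      rw [Finset.mem_Icc]
      exact ⟨Int.ceil_le.2 (by linarith), Int.le_floor.2 (by linarith)⟩
    have hmem : (a', b', d) ∈ T := by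
      rw [hT]
      refine Finset.mem_biUnion.2 ⟨d, Finset.mem_Icc.2 ⟨by omega, by omega⟩, ?_⟩
      exact Finset.mem_product.2 ⟨habs a' a ha',
        Finset.mem_product.2 ⟨habs b' b hb', Finset.mem_singleton_self d⟩⟩
    exact Finset.mem_coe.2 hmem
  have hfinT : (f '' ↑T).Finite := T.finite_toSet.image f
  have hfin := hfinT.subset hsub
  refine ⟨hfin, ?_⟩
  have h1 := Set.ncard_le_ncard hsub hfinT
  have h2 : (f '' ↑T).ncard ≤ T.card := by
    rw [← Set.ncard_coe_finset T]
    exact Set.ncard_image_le T.finite_toSet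
  have h3 : T.card ≤ (2 * D + 1) * (M * M) := by
    refine le_trans (Finset.card_biUnion_le) ?_
    have hbox : ∀ d ∈ Finset.Icc (c - (D:ℤ)) (c + (D:ℤ)),
        ((Finset.Icc ⌈(2:ℝ)^(c-d) * a - L⌉ ⌊(2:ℝ)^(c-d) * a + L⌋) ×ˢ
        ((Finset.Icc ⌈(2:ℝ)^(c-d) * b - L⌉ ⌊(2:ℝ)^(c-d) * b + L⌋) ×ˢ
        ({d} : Finset ℤ))).card ≤ M * M := by
      intro d _
      rw [Finset.card_product, Finset.card_product, Finset.card_singleton, mul_one]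
      exact Nat.mul_le_mul (card_Icc_le' _ _) (card_Icc_le' _ _)
    calc ∑ d ∈ Finset.Icc (c - (D:ℤ)) (c + (D:ℤ)), _ ≤
        (Finset.Icc (c - (D:ℤ)) (c + (D:ℤ))).card * (M * M) :=
          Finset.sum_le_card_nsmul _ _ _ hbox
      _ = (2 * D + 1) * (M * M) := by
          rw [Int.card_Icc]; congr 1; omega
  have hcard : {y | y ∈ Xset ∧ dH ((2:ℝ)^c * a, (2:ℝ)^c * b, (2:ℝ)^c) y ≤ r}.ncard
      ≤ (2 * D + 1) * (M * M) := le_trans h1 (le_trans h2 h3)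
  have hDr : (D:ℝ) ≤ 2 * (r + 2) + 1 := by
    have h0 : (0:ℝ) ≤ (r + 2) / Real.log 2 := by positivity
    have hceil : (D:ℝ) < (r + 2) / Real.log 2 + 1 := Nat.ceil_lt_add_one h0
    have : (r + 2) / Real.log 2 ≤ (r + 2) * 2 := by
      rw [div_le_iff₀ (by linarith)]; nlinarith
    linarith
  have hMr : (M:ℝ) ≤ 7 * E := by
    have hfl : ((⌊2 * L⌋₊ : ℕ) : ℝ) ≤ 2 * L := Nat.floor_le (by positivity)
    have : (M:ℝ) ≤ 2 * L + 1 := by rw [hM]; push_cast; linarith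
    have h2L : 2 * L ≤ 6 * E := by rw [hL]; nlinarith
    linarith
  have hexp3 : Real.exp (3 * r) = E * E * E := by
    rw [show (3:ℝ) * r = r + r + r by ring, Real.exp_add, Real.exp_add, hE]
  calc ({y | y ∈ Xset ∧ dH ((2:ℝ)^c * a, (2:ℝ)^c * b, (2:ℝ)^c) y ≤ r}.ncard : ℝ)
      ≤ ((2 * D + 1) * (M * M) : ℕ) := by exact_mod_cast hcard
    _ = (2 * (D:ℝ) + 1) * ((M:ℝ) * (M:ℝ)) := by push_cast; ring
    _ ≤ (14 * E) * ((7 * E) * (7 * E)) := by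
        have hDE : 2 * (D:ℝ) + 1 ≤ 14 * E := by
          nlinarith [Real.add_one_le_exp r]
        have hM0 : (0:ℝ) ≤ (M:ℝ) := Nat.cast_nonneg M
        have hMM : (M:ℝ) * (M:ℝ) ≤ (7 * E) * (7 * E) :=
          mul_le_mul hMr hMr hM0 (by positivity)
        exact mul_le_mul hDE hMM (by positivity) (by positivity)
    _ = 686 * Real.exp (3 * r) := by rw [hexp3]; ring
end
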